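/- Let H be an infinite-dimensional separable complex Hilbert space with orthonormal basis (v_j)_{j≥1}. Then there exists a sequence (w_j)_{j≥1} of unit vectors in H which is itself an orthonormal basis of H (so that (w_j) is a Riesz basis with optimal lower frame constant A_∞ = 1), but such that liminf_{n→∞} A_n = 0, where for each n ≥ 1, A_n = inf_{‖f‖=1} ( Σ_{j=1}^n |⟨f,w_j⟩|² + Σ_{j>n} |⟨f,v_j⟩|² ) is the optimal lower frame bound of B_n. In particular, the sequence (A_n)_{n≥1} is not monotone and the inequality A_∞ ≥ liminf_{n→∞} A_n can be strict. -/

import Mathlib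

open scoped BigOperators ComplexConjugate
open Submodule Filter

noncomputable section

local notation "⟪" x ", " y "⟫" => @inner ℂ _ _ x y

variable {H : Type*} [NormedAddCommGroup H] [InnerProductSpace ℂ H] [CompleteSpace H]

/-- `u` is a frame of `H` with frame bounds `A ≤ B`. -/
def IsFrame (u : ℕ → H) (A B : ℝ) : Prop :=
  0 < A ∧ A ≤ B ∧ ∀ f : H,
    Summable (fun j => ‖⟪f, u j⟫‖ ^ 2) ∧
    A * ‖f‖ ^ 2 ≤ (∑' j, ‖⟪f, u j⟫‖ ^ 2) ∧ (∑' j, ‖⟪f, u j⟫‖ ^ 2) ≤ B * ‖f‖ ^ 2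

/-- `u` is a Riesz sequence in `H` with bounds `A ≤ B`. -/
def IsRieszSeq (u : ℕ → H) (A B : ℝ) : Prop :=
  0 < A ∧ A ≤ B ∧ ∀ (s : Finset ℕ) (c : ℕ → ℂ),
    A * ∑ j ∈ s, ‖c j‖ ^ 2 ≤ ‖∑ j ∈ s, c j • u j‖ ^ 2 ∧
    ‖∑ j ∈ s, c j • u j‖ ^ 2 ≤ B * ∑ j ∈ s, ‖c j‖ ^ 2

/-- A Riesz basis of `H` with frame constants `A ≤ B` is simultaneously a frame and a
Riesz sequence with those bounds. -/
def IsRieszBasis (u : ℕ → H) (A B : ℝ) : Prop := IsFrame u A B ∧ IsRieszSeq u A B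

/-- Optimal frame constants of a Riesz basis: the largest `A` and the smallest `B`. -/
def OptimalRieszConstants (u : ℕ → H) (A B : ℝ) : Prop :=
  IsRieszBasis u A B ∧ ∀ A' B' : ℝ, IsRieszBasis u A' B' → A' ≤ A ∧ B ≤ B'

/-- Optimal frame bounds of a frame: the largest `A` and the smallest `B`. -/
def OptimalFrameBounds (u : ℕ → H) (A B : ℝ) : Prop :=
  IsFrame u A B ∧ ∀ A' B' : ℝ, IsFrame u A' B' → A' ≤ A ∧ B ≤ B'

/-- The sequence `B_N`: the first `N` vectors of `v` are replaced by those of `w`. -/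
def BNseq (w v : ℕ → H) (N : ℕ) : ℕ → H := fun j => if j < N then w j else v j

/-- The orthogonal projection `p'_N` onto `H'_N = span {v_0, …, v_{N-1}}`
(for an orthonormal family `v`). -/
def pproj (v : ℕ → H) (N : ℕ) (u : H) : H := ∑ j ∈ Finset.range N, ⟪v j, u⟫ • v j

/-- The sequence `B̃_N`: the projections `p'_N (w_j)` for `j < N`, followed by the `v_j`. -/
def BtNseq (w v : ℕ → H) (N : ℕ) : ℕ → H := fun j => if j < N then pproj v N (w j) else v j

/-- The `N × N` matrix `U'_N` with (paper-convention) entries `⟨p'_N w_i, p'_N w_j⟩`;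
here stated with Mathlib's inner product, conjugate-linear in the first slot. -/
def Umat' (v w : ℕ → H) (N : ℕ) : Matrix (Fin N) (Fin N) ℂ :=
  Matrix.of fun i j => ⟪pproj v N (w (j : ℕ)), pproj v N (w (i : ℕ))⟫

/-- The `N × N` matrix `U''_N` with (paper-convention) entries `⟨p''_N w_i, p''_N w_j⟩`,
where `p''_N u = u - p'_N u`. -/
def Umat'' (v w : ℕ → H) (N : ℕ) : Matrix (Fin N) (Fin N) ℂ :=
  Matrix.of fun i j =>
    ⟪w (j : ℕ) - pproj v N (w (j : ℕ)), w (i : ℕ) - pproj v N (w (i : ℕ))⟫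

/-- The quadratic form `⟨U c, c⟩ = ∑_{i,j} U_{i,j} c_i conj (c_j)` (real part). -/
def quadForm {N : ℕ} (U : Matrix (Fin N) (Fin N) ℂ) (c : Fin N → ℂ) : ℝ :=
  (∑ i, ∑ j, U i j * c i * conj (c j)).re

/-- The matrix `M_N` with (paper-convention) entries `⟨w_j, v_k⟩`. -/
def Mmat (v w : ℕ → H) (N : ℕ) : Matrix (Fin N) (Fin N) ℂ :=
  Matrix.of fun j k => ⟪v (k : ℕ), w (j : ℕ)⟫

/-- The quantity `∑_{j ≤ N} |⟨f, w_j⟩|² + ∑_{j > N} |⟨f, v_j⟩|²`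
(the squared norm of the analysis operator of `B_N` applied to `f`). -/
def frameFun (v w : ℕ → H) (N : ℕ) (f : H) : ℝ :=
  (∑ j ∈ Finset.range N, ‖⟪f, w j⟫‖ ^ 2) + ∑' j : {j : ℕ // N ≤ j}, ‖⟪f, v (j : ℕ)⟫‖ ^ 2

/-- The quantity `∑_{j ≤ N} |⟨f, p'_N w_j⟩|² + ∑_{j > N} |⟨f, v_j⟩|²`
(the squared norm of the analysis operator of `B̃_N` applied to `f`). -/
def frameFunT (v w : ℕ → H) (N : ℕ) (f : H) : ℝ :=
  (∑ j ∈ Finset.range N, ‖⟪f, pproj v N (w j)⟫‖ ^ 2) +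
    ∑' j : {j : ℕ // N ≤ j}, ‖⟪f, v (j : ℕ)⟫‖ ^ 2

/-! ### Auxiliary material for the proof -/

/-- The pair-swapping permutation `0 ↔ 1`, `2 ↔ 3`, … -/
def sigSwap (n : ℕ) : ℕ := if n % 2 = 0 then n + 1 else n - 1

lemma sigSwap_invol : Function.Involutive sigSwap := by
  intro n; unfold sigSwap; split_ifs <;> omega

lemma sigSwap_mem_even {n j : ℕ} (hn : n % 2 = 0) (hj : j < n) : sigSwap j < n := by
  unfold sigSwap; split_ifs <;> omega

lemma sigSwap_ne_of_odd {n j : ℕ} (hn : n % 2 = 1) (hj : j < n) : sigSwap j ≠ n - 1 := by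
  unfold sigSwap; split_ifs <;> omega

/-- Parseval identity for an orthonormal family with dense span. -/
lemma parseval_hasSum (v : ℕ → H) (hv : Orthonormal ℂ v)
    (hv_top : (span ℂ (Set.range v)).topologicalClosure = ⊤) (f : H) :
    HasSum (fun j => ‖⟪f, v j⟫‖ ^ 2) (‖f‖ ^ 2) := by
  have hsp : ⊤ ≤ (span ℂ (Set.range v)).topologicalClosure := le_of_eq hv_top.symm
  set b : HilbertBasis ℕ ℂ H := HilbertBasis.mk hv hsp with hbdef
  have hb : ∀ j, b j = v j := fun j => congrFun (HilbertBasis.coe_mk hv hsp) j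
  have h := (b.hasSum_inner_mul_inner f f).mapL Complex.reCLM
  have e1 : (fun j => Complex.reCLM (⟪f, b j⟫ * ⟪b j, f⟫))
      = fun j => ‖⟪f, v j⟫‖ ^ 2 := by
    funext j
    rw [hb j, ← inner_conj_symm (v j) f, Complex.mul_conj]
    simp [Complex.normSq_eq_norm_sq, ← Complex.ofReal_pow]
  have e2 : Complex.reCLM ⟪f, f⟫ = ‖f‖ ^ 2 := inner_self_eq_norm_sq (𝕜 := ℂ) f
  rw [e1, e2] at h
  exact h

/-- Rewriting the tail `tsum` as a `tsum` over the complement of `Finset.range n`. -/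
lemma tail_tsum_eq (n : ℕ) (g : ℕ → ℝ) :
    (∑' j : {j : ℕ // n ≤ j}, g (j : ℕ))
      = ∑' j : ↑(↑(Finset.range n) : Set ℕ)ᶜ, g (j : ℕ) := by
  rw [show (∑' j : {j : ℕ // n ≤ j}, g (j : ℕ)) = ∑' j : ({j : ℕ | n ≤ j} : Set ℕ), g (j : ℕ)
    from rfl]
  rw [tsum_subtype, tsum_subtype]
  apply tsum_congr
  intro j
  by_cases hj : n ≤ j
  · rw [Set.indicator_of_mem (by simpa using hj), Set.indicator_of_mem (by simp [hj, Nat.not_lt.mpr hj])]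
  · rw [Set.indicator_of_notMem (by simpa using hj),
      Set.indicator_of_notMem (by simp [Nat.lt_of_not_le hj])]

theorem statement17 (v : ℕ → H) (hv : Orthonormal ℂ v)
    (hv_top : (span ℂ (Set.range v)).topologicalClosure = ⊤) :
    ∃ w : ℕ → H, (∀ j, ‖w j‖ = 1) ∧ Orthonormal ℂ w ∧
      (span ℂ (Set.range w)).topologicalClosure = ⊤ ∧
      OptimalRieszConstants w 1 1 ∧
      liminf (fun n => sInf {x : ℝ | ∃ f : H, ‖f‖ = 1 ∧ x = frameFun v w n f}) atTop = 0 ∧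
      ¬ Monotone (fun n => sInf {x : ℝ | ∃ f : H, ‖f‖ = 1 ∧ x = frameFun v w n f}) := by
  classical
  set w : ℕ → H := fun j => v (sigSwap j) with hwdef
  have hw : Orthonormal ℂ w := hv.comp sigSwap sigSwap_invol.injective
  have hrange : Set.range w = Set.range v := sigSwap_invol.surjective.range_comp v
  have hw_top : (span ℂ (Set.range w)).topologicalClosure = ⊤ := by rw [hrange]; exact hv_top
  -- norm-square of finite combinations of `w`
  have hnormsum : ∀ (s : Finset ℕ) (c : ℕ → ℂ),
      ‖∑ j ∈ s, c j • w j‖ ^ 2 = ∑ j ∈ s, ‖c j‖ ^ 2 := by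
    intro s c
    have e := hw.inner_sum c c s
    have e2 : ‖∑ j ∈ s, c j • w j‖ ^ 2
        = RCLike.re (∑ i ∈ s, (starRingEnd ℂ) (c i) * c i) := by
      rw [← e, inner_self_eq_norm_sq]
    rw [e2, map_sum]
    refine Finset.sum_congr rfl fun i _ => ?_
    simp [RCLike.conj_mul, ← Complex.ofReal_pow]
  -- values of the frame function
  have hFrameEven : ∀ n : ℕ, n % 2 = 0 → ∀ f : H, ‖f‖ = 1 → frameFun v w n f = 1 := by
    intro n hn f hf
    have hsum := parseval_hasSum v hv hv_top f
    unfold frameFun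
    have e1 : ∑ j ∈ Finset.range n, ‖⟪f, w j⟫‖ ^ 2
        = ∑ j ∈ Finset.range n, ‖⟪f, v j⟫‖ ^ 2 := by
      refine Finset.sum_nbij' sigSwap sigSwap ?_ ?_ ?_ ?_ ?_
      · intro a ha; exact Finset.mem_range.2 (sigSwap_mem_even hn (Finset.mem_range.1 ha))
      · intro a ha; exact Finset.mem_range.2 (sigSwap_mem_even hn (Finset.mem_range.1 ha))
      · intro a _; exact sigSwap_invol a
      · intro a _; exact sigSwap_invol a
      · intro a _; rfl
    rw [e1, tail_tsum_eq n (fun k => ‖⟪f, v k⟫‖ ^ 2), Summable.sum_add_tsum_compl hsum.summable, hsum.tsum_eq, hf, one_pow]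
  have hFrameOdd : ∀ n : ℕ, n % 2 = 1 → frameFun v w n (v (n - 1)) = 0 := by
    intro n hn
    unfold frameFun
    have e1 : ∑ j ∈ Finset.range n, ‖⟪v (n-1), w j⟫‖ ^ 2 = 0 := by
      refine Finset.sum_eq_zero fun j hj => ?_
      have h0 : ⟪v (n-1), v (sigSwap j)⟫ = 0 :=
        hv.2 (Ne.symm (sigSwap_ne_of_odd hn (Finset.mem_range.1 hj)))
      simp [hwdef, h0]
    have e2 : (∑' j : {j : ℕ // n ≤ j}, ‖⟪v (n-1), v (j : ℕ)⟫‖ ^ 2) = 0 := by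
      have hz : ∀ j : {j : ℕ // n ≤ j}, ‖⟪v (n-1), v (j : ℕ)⟫‖ ^ 2 = 0 := by
        intro j
        have hne : (n - 1) ≠ (j : ℕ) := by have := j.2; omega
        simp [hv.2 hne]
      rw [tsum_congr hz, tsum_zero]
    rw [e1, e2, add_zero]
  -- sInf values
  have haEven : ∀ n : ℕ, n % 2 = 0 →
      sInf {x : ℝ | ∃ f : H, ‖f‖ = 1 ∧ x = frameFun v w n f} = 1 := by
    intro n hn
    have hset : {x : ℝ | ∃ f : H, ‖f‖ = 1 ∧ x = frameFun v w n f} = {1} := by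
      ext x
      simp only [Set.mem_setOf_eq, Set.mem_singleton_iff]
      constructor
      · rintro ⟨f, hf, rfl⟩; exact hFrameEven n hn f hf
      · rintro rfl; exact ⟨v 0, hv.1 0, (hFrameEven n hn (v 0) (hv.1 0)).symm⟩
    rw [hset, csInf_singleton]
  have haOdd : ∀ n : ℕ, n % 2 = 1 →
      sInf {x : ℝ | ∃ f : H, ‖f‖ = 1 ∧ x = frameFun v w n f} = 0 := by
    intro n hn
    have hmem : (0:ℝ) ∈ {x : ℝ | ∃ f : H, ‖f‖ = 1 ∧ x = frameFun v w n f} :=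
      ⟨v (n-1), hv.1 _, (hFrameOdd n hn).symm⟩
    have hlb : ∀ x ∈ {x : ℝ | ∃ f : H, ‖f‖ = 1 ∧ x = frameFun v w n f}, (0:ℝ) ≤ x := by
      rintro x ⟨f, hf, rfl⟩
      unfold frameFun
      have h1 : (0:ℝ) ≤ ∑ j ∈ Finset.range n, ‖⟪f, w j⟫‖ ^ 2 :=
        Finset.sum_nonneg fun _ _ => pow_nonneg (norm_nonneg _) 2
      have h2 : (0:ℝ) ≤ ∑' j : {j : ℕ // n ≤ j}, ‖⟪f, v (j : ℕ)⟫‖ ^ 2 :=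
        tsum_nonneg fun _ => pow_nonneg (norm_nonneg _) 2
      linarith
    exact le_antisymm (csInf_le ⟨0, hlb⟩ hmem) (le_csInf ⟨0, hmem⟩ hlb)
  have hAfun : (fun n => sInf {x : ℝ | ∃ f : H, ‖f‖ = 1 ∧ x = frameFun v w n f})
      = fun n => if n % 2 = 0 then (1:ℝ) else 0 := by
    funext n
    rcases Nat.mod_two_eq_zero_or_one n with h | h
    · rw [if_pos h]; exact haEven n h
    · rw [if_neg (by omega)]; exact haOdd n h
  -- Riesz basis with optimal constants
  have hRB : IsRieszBasis w 1 1 := by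
    constructor
    · refine ⟨one_pos, le_refl 1, fun f => ?_⟩
      have hs := parseval_hasSum w hw hw_top f
      exact ⟨hs.summable, by rw [hs.tsum_eq, one_mul], by rw [hs.tsum_eq, one_mul]⟩
    · refine ⟨one_pos, le_refl 1, fun s c => ?_⟩
      rw [hnormsum s c, one_mul]
      exact ⟨le_refl _, le_refl _⟩
  have hopt : ∀ A' B' : ℝ, IsRieszBasis w A' B' → A' ≤ 1 ∧ 1 ≤ B' := by
    intro A' B' hAB
    obtain ⟨_, _, hrs⟩ := hAB.2
    have h0 := hrs {0} (fun _ => 1)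
    simp only [Finset.sum_singleton, norm_one, one_pow, mul_one, one_smul] at h0
    rw [show ‖w 0‖ ^ 2 = 1 by rw [hw.1 0]; norm_num] at h0
    exact h0
  refine ⟨w, fun j => hw.1 j, hw, hw_top, ⟨hRB, hopt⟩, ?_, ?_⟩
  · rw [hAfun]
    have hge : ∀ n : ℕ, (0:ℝ) ≤ if n % 2 = 0 then (1:ℝ) else 0 := by
      intro n; split_ifs <;> norm_num
    have hle : ∀ n : ℕ, (if n % 2 = 0 then (1:ℝ) else 0) ≤ 1 := by
      intro n; split_ifs <;> norm_num
    apply le_antisymm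
    · apply Filter.liminf_le_of_frequently_le
      · refine Filter.frequently_atTop.2 fun N => ⟨2*N+1, by omega, ?_⟩
        rw [if_neg (by omega)]
      · exact Filter.isBoundedUnder_of ⟨0, fun n => hge n⟩
    · refine Filter.le_liminf_of_le ?_ (Filter.Eventually.of_forall hge)
      exact (Filter.isBoundedUnder_of ⟨1, fun n => hle n⟩).isCoboundedUnder_ge
  · rw [hAfun]
    intro h
    have h01 := h (Nat.zero_le 1)
    norm_num at h01

end
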